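/- Let F be an entire function, and let (z_i) be a sequence of pairwise distinct complex numbers converging to 0. Then for each n ≥ 0, the divided differences converge to the Taylor coefficients: lim_{m→∞} F^{(n)}(z_{m+1}, …, z_{m+n+1}) = F^{(n)}(0)/n!. -/

import Mathlib

/-- Divided differences: the list holds the points in reverse order,
`divDiff F [z_{n+1}, z_n, …, z₁] = F^{(n)}(z₁, …, z_{n+1})`. -/
noncomputable def divDiff (F : ℂ → ℂ) : List ℂ → ℂ
  | [] => 0
  | [z] => F z
  | a :: b :: l => (divDiff F (b :: l) - divDiff F (a :: l)) / (b - a)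
termination_by l => l.length

/-- Divided difference `F^{(n)}(z 0, …, z n)` of a tuple. -/
noncomputable def divDiffT (F : ℂ → ℂ) (n : ℕ) (z : Fin (n + 1) → ℂ) : ℂ :=
  divDiff F (List.ofFn z).reverse

open Filter Metric Complex MeasureTheory intervalIntegral

private lemma prodCont {l : List ℂ} (hl : ∀ a ∈ l, ‖a‖ < 1) :
    ContinuousOn (fun z : ℂ => (l.map fun a => (z - a)⁻¹).prod) (sphere (0:ℂ) 1) := by
  induction l with
  | nil => simpa using continuousOn_const
  | cons a t ih =>
    simp only [List.map_cons, List.prod_cons]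
    refine ContinuousOn.mul ?_ (ih fun b hb => hl b (List.mem_cons_of_mem _ hb))
    refine (continuous_sub_right a).continuousOn.inv₀ ?_
    intro w hw
    have ha : ‖a‖ < 1 := hl a List.mem_cons_self
    have hw1 : ‖w‖ = 1 := by simpa using hw
    exact sub_ne_zero.mpr fun h => by rw [h] at hw1; exact absurd hw1 (ne_of_lt ha)

private lemma integrList {F : ℂ → ℂ} (hF : Continuous F) {l : List ℂ}
    (hl : ∀ a ∈ l, ‖a‖ < 1) :
    CircleIntegrable (fun z => (l.map fun a => (z - a)⁻¹).prod * F z) 0 1 :=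
  ((prodCont hl).mul hF.continuousOn).circleIntegrable zero_le_one

private lemma hermite (F : ℂ → ℂ) (hF : Differentiable ℂ F) :
    ∀ N (l : List ℂ), l.length ≤ N → l ≠ [] → l.Pairwise (· ≠ ·) → (∀ a ∈ l, ‖a‖ < 1) →
      divDiff F l =
        (2 * (Real.pi : ℂ) * Complex.I)⁻¹ *
          ∮ z in C(0, 1), (l.map fun a => (z - a)⁻¹).prod * F z := by
  intro N
  induction N with
  | zero => intro l hlen hne; simp_all
  | succ N ih =>
    intro l hlen hne hpw hnorm
    match l with
    | [z₀] =>
      rw [divDiff]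
      have h0 : z₀ ∈ ball (0:ℂ) 1 := by
        simpa [mem_ball, dist_zero_right] using hnorm z₀ (by simp)
      have := (hF.diffContOnCl (s := ball (0:ℂ) 1)).two_pi_i_inv_smul_circleIntegral_sub_inv_smul h0
      rw [← this]
      simp [smul_eq_mul]
    | a :: b :: t =>
      have hab : b - a ≠ 0 := by
        have : a ≠ b := (List.pairwise_cons.mp hpw).1 b (by simp)
        exact sub_ne_zero.mpr (Ne.symm this)
      have hpwT : (b :: t).Pairwise (· ≠ ·) := (List.pairwise_cons.mp hpw).2
      have hpwA : (a :: t).Pairwise (· ≠ ·) := by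
        rw [List.pairwise_cons]
        exact ⟨fun x hx => (List.pairwise_cons.mp hpw).1 x (by simp [hx]),
          (List.pairwise_cons.mp hpwT).2⟩
      have hnB : ∀ x ∈ b :: t, ‖x‖ < 1 := fun x hx => hnorm x (by simp_all)
      have hnA : ∀ x ∈ a :: t, ‖x‖ < 1 := by
        intro x hx
        rcases List.mem_cons.mp hx with h | h
        · exact hnorm x (by simp [h])
        · exact hnorm x (by simp [h])
      have hlB : (b :: t).length ≤ N := by simpa using hlen
      have hlA : (a :: t).length ≤ N := by simpa using hlen
      rw [divDiff, ih _ hlB (by simp) hpwT hnB, ih _ hlA (by simp) hpwA hnA,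
        ← mul_sub, ← circleIntegral.integral_sub (integrList hF.continuous hnB)
          (integrList hF.continuous hnA)]
      rw [div_eq_mul_inv, mul_comm _ (b-a)⁻¹, ← mul_assoc, mul_comm (b-a)⁻¹, mul_assoc]
      congr 1
      have hsm : ((b - a)⁻¹ : ℂ) *
          (∮ z in C(0,1), ((List.map (fun a => (z - a)⁻¹) (b :: t)).prod * F z -
            (List.map (fun a => (z - a)⁻¹) (a :: t)).prod * F z)) =
          ∮ z in C(0,1), (b - a)⁻¹ * ((List.map (fun a => (z - a)⁻¹) (b :: t)).prod * F z -
            (List.map (fun a => (z - a)⁻¹) (a :: t)).prod * F z) :=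
        (circleIntegral.integral_smul ((b - a)⁻¹) _ 0 1).symm
      rw [hsm]
      refine circleIntegral.integral_congr zero_le_one fun w hw => ?_
      have hw1 : ‖w‖ = 1 := by simpa using hw
      have hza : w - a ≠ 0 := sub_ne_zero.mpr fun h => by
        have := hnorm a (by simp); rw [← h] at this; rw [hw1] at this; exact absurd this (lt_irrefl 1)
      have hzb : w - b ≠ 0 := sub_ne_zero.mpr fun h => by
        have := hnorm b (by simp); rw [← h] at this; rw [hw1] at this; exact absurd this (lt_irrefl 1)
      simp only [List.map_cons, List.prod_cons, smul_eq_mul]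
      field_simp
      ring

open MeasureTheory intervalIntegral

private lemma tendsto_int (F : ℂ → ℂ) (hF : Continuous F) (z : ℕ → ℂ)
    (hz : Tendsto z atTop (nhds 0)) (n M : ℕ) (hM : ∀ k ≥ M, ‖z k‖ < 1/2) :
    Tendsto (fun m : ℕ => (2 * (Real.pi : ℂ) * Complex.I)⁻¹ *
        ∮ w in C(0, 1), (∏ i : Fin (n+1), (w - z (m + 1 + i))⁻¹) * F w) atTop
      (nhds ((2 * (Real.pi : ℂ) * Complex.I)⁻¹ *
        ∮ w in C(0, 1), (∏ i : Fin (n+1), (w - (0:ℂ))⁻¹) * F w)) := by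
  refine Tendsto.const_mul _ ?_
  simp only [circleIntegral, deriv_circleMap, smul_eq_mul]
  obtain ⟨C, hC⟩ := (isCompact_sphere (0:ℂ) 1).exists_bound_of_continuousOn hF.continuousOn
  have hC0 : 0 ≤ C := le_trans (norm_nonneg _) (hC _ (circleMap_mem_sphere 0 zero_le_one 0))
  have hnormc : ∀ θ : ℝ, ‖circleMap 0 1 θ‖ = 1 := fun θ => by
    simpa using abs_circleMap_zero 1 θ
  have hdist : ∀ (θ : ℝ) (k : ℕ), k ≥ M → (1/2 : ℝ) ≤ ‖circleMap 0 1 θ - z k‖ := by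
    intro θ k hk
    have := norm_sub_norm_le (circleMap 0 1 θ) (z k)
    have h2 := hM k hk
    rw [hnormc θ] at this
    linarith
  refine tendsto_integral_filter_of_dominated_convergence (fun _ => 2^(n+1) * C) ?_ ?_ ?_ ?_
  · filter_upwards [eventually_ge_atTop M] with m hm
    have hcont : Continuous fun θ : ℝ => circleMap 0 1 θ * Complex.I *
        ((∏ i : Fin (n+1), (circleMap 0 1 θ - z (m + 1 + i))⁻¹) * F (circleMap 0 1 θ)) := by
      refine ((continuous_circleMap 0 1).mul continuous_const).mul
        (Continuous.mul ?_ (hF.comp (continuous_circleMap 0 1)))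
      refine continuous_finset_prod _ fun i _ => Continuous.inv₀
        ((continuous_circleMap 0 1).sub continuous_const) fun θ => ?_
      refine sub_ne_zero.mpr fun h => ?_
      have := hdist θ (m + 1 + i) (by omega)
      rw [h, sub_self] at this
      norm_num at this
    exact hcont.aestronglyMeasurable
  · filter_upwards [eventually_ge_atTop M] with m hm
    refine ae_of_all _ fun θ _ => ?_
    rw [norm_mul, norm_mul, norm_mul]
    have h1 : ‖circleMap 0 1 θ‖ * ‖Complex.I‖ = 1 := by
      rw [hnormc θ, Complex.norm_I, mul_one]
    rw [h1, one_mul]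
    have hprod : ‖∏ i : Fin (n+1), (circleMap 0 1 θ - z (m + 1 + i))⁻¹‖ ≤ 2^(n+1) := by
      rw [norm_prod]
      calc ∏ i : Fin (n+1), ‖(circleMap 0 1 θ - z (m + 1 + i))⁻¹‖
          ≤ ∏ _i : Fin (n+1), (2:ℝ) := by
            refine Finset.prod_le_prod (fun i _ => norm_nonneg _) fun i _ => ?_
            rw [norm_inv]
            have := hdist θ (m + 1 + i) (by omega)
            calc ‖circleMap 0 1 θ - z (m + 1 + i)‖⁻¹ ≤ (1/2 : ℝ)⁻¹ := by
                  apply inv_anti₀ <;> linarith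
              _ = 2 := by norm_num
        _ = 2^(n+1) := by simp
    exact mul_le_mul hprod (hC _ (circleMap_mem_sphere 0 zero_le_one θ)) (norm_nonneg _)
      (by positivity)
  · exact intervalIntegrable_const
  · refine ae_of_all _ fun θ _ => ?_
    refine Tendsto.mul tendsto_const_nhds (Tendsto.mul ?_ tendsto_const_nhds)
    refine tendsto_finset_prod _ fun i _ => ?_
    have hzi : Tendsto (fun m : ℕ => z (m + 1 + i)) atTop (nhds 0) := by
      have : Tendsto (fun m : ℕ => m + (1 + (i:ℕ))) atTop atTop := tendsto_add_atTop_nat _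
      simpa [Function.comp_def, ← add_assoc] using hz.comp this
    refine Tendsto.inv₀ (Tendsto.sub tendsto_const_nhds hzi) ?_
    rw [sub_zero]
    exact circleMap_ne_center one_ne_zero



/-- Divided differences of an entire function along a sequence of pairwise distinct points
tending to `0` converge to the Taylor coefficients. -/
theorem stmt14 (F : ℂ → ℂ) (hF : Differentiable ℂ F) (z : ℕ → ℂ)
    (hinj : Function.Injective z) (hz : Tendsto z atTop (nhds 0)) (n : ℕ) :
    Tendsto (fun m : ℕ => divDiffT F n (fun i : Fin (n + 1) => z (m + 1 + (i : ℕ))))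
      atTop (nhds (iteratedDeriv n F 0 / (n.factorial : ℂ))) := by
  obtain ⟨M, hM⟩ : ∃ M : ℕ, ∀ k ≥ M, ‖z k‖ < 1/2 := by
    have := (Metric.tendsto_atTop.mp hz) (1/2) (by norm_num)
    simpa [dist_zero_right] using this
  have h2 := tendsto_int F hF.continuous z hz n M hM
  have hlimval : (2 * (Real.pi : ℂ) * Complex.I)⁻¹ *
      (∮ w in C(0, 1), (∏ _i : Fin (n+1), (w - (0:ℂ))⁻¹) * F w) =
      iteratedDeriv n F 0 / (n.factorial : ℂ) := by
    have hball := hF.hasFPowerSeriesOnBall 0 (R := 1) one_pos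
    have h1 := hball.factorial_smul (1 : ℂ) n
    rw [← iteratedDeriv_eq_iteratedFDeriv] at h1
    have hcau := cauchyPowerSeries_apply F 0 1 n 1
    simp only [NNReal.coe_one] at h1; rw [hcau] at h1
    have hint : (∮ w in C(0, 1), (1 / (w - 0)) ^ n • (w - 0)⁻¹ • F w) =
        ∮ w in C(0, 1), (∏ _i : Fin (n+1), (w - (0:ℂ))⁻¹) * F w := by
      refine circleIntegral.integral_congr zero_le_one fun w hw => ?_
      have hw0 : w ≠ 0 := by
        intro h
        have : ‖w‖ = 1 := by simpa using hw
        rw [h] at this; norm_num at this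
      simp only [smul_eq_mul, sub_zero, Finset.prod_const, Finset.card_univ,
        Fintype.card_fin, one_div]
      ring
    rw [smul_eq_mul, hint, nsmul_eq_mul] at h1
    rw [← h1]
    have hfac : (n.factorial : ℂ) ≠ 0 := by exact_mod_cast Nat.factorial_ne_zero n
    exact (mul_div_cancel_left₀ _ hfac).symm
  rw [hlimval] at h2
  refine h2.congr' ?_
  filter_upwards [eventually_ge_atTop M] with m hm
  set w : Fin (n+1) → ℂ := fun i => z (m + 1 + (i : ℕ)) with hw
  have hne : (List.ofFn w).reverse ≠ [] := by
    intro h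
    have := congrArg List.length h
    simp at this
  have hpw : (List.ofFn w).reverse.Pairwise (· ≠ ·) := by
    rw [List.pairwise_reverse, List.pairwise_ofFn]
    intro i j hij h
    have := hinj h
    have hij' : (i : ℕ) < (j : ℕ) := hij
    omega
  have hnorm : ∀ a ∈ (List.ofFn w).reverse, ‖a‖ < 1 := by
    intro a ha
    rw [List.mem_reverse, List.mem_ofFn] at ha
    obtain ⟨i, rfl⟩ := ha
    have := hM (m + 1 + (i : ℕ)) (by omega)
    linarith
  have hher := hermite F hF (List.ofFn w).reverse.length (List.ofFn w).reverse le_rfl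
    hne hpw hnorm
  have hprodeq : ∀ u : ℂ,
      ((List.ofFn w).reverse.map fun a => (u - a)⁻¹).prod =
        ∏ i : Fin (n+1), (u - w i)⁻¹ := fun u => by
    rw [List.map_reverse, List.prod_reverse, List.map_ofFn, List.prod_ofFn]
    rfl
  rw [show divDiffT F n w = divDiff F (List.ofFn w).reverse from rfl, hher]
  congr 1
  exact circleIntegral.integral_congr zero_le_one fun u _ => by rw [hprodeq u]
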